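/- Let n ≥ 1 and let P ∈ ℤ[X] be a polynomial of degree n with non-negative integer coefficients and P(0) > 0. Define h(j) = P(j) for j ≥ 0 and h(j) = 0 for j < 0. Then qdepth(h) ≤ 2^{n+1}. -/
import Mathlib


/-- `β_k^d(h) = Σ_{j ≤ k} (-1)^{k-j} C(d-j, k-j) h(j)` (a finite sum when `h`
vanishes for `j ≪ 0`). -/
noncomputable def beta (h : ℤ → ℤ) (d k : ℤ) : ℤ :=
  ∑ᶠ j ∈ Set.Iic k, (-1 : ℤ) ^ (k - j).toNat * ((d - j).toNat.choose (k - j).toNat : ℤ) * h j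

/-- The set of `d` such that `β_k^d(h) ≥ 0` for all `k ≤ d`; its maximum is `qdepth h`. -/
def qdepthSet (h : ℤ → ℤ) : Set ℤ := {d : ℤ | ∀ k ≤ d, 0 ≤ beta h d k}

/-- When `h` vanishes on negatives, the finsum defining `beta` is a finite sum over `Icc 0 k`. -/
lemma beta_eq_sum (h : ℤ → ℤ) (h0 : ∀ j : ℤ, j < 0 → h j = 0) (d k : ℤ) :
    beta h d k = ∑ j ∈ Finset.Icc 0 k,
      (-1 : ℤ) ^ (k - j).toNat * ((d - j).toNat.choose (k - j).toNat : ℤ) * h j := by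
  apply finsum_mem_eq_sum_of_inter_support_eq
  ext j
  simp only [Set.mem_inter_iff, Function.mem_support, Finset.coe_Icc, Set.mem_Iic, Set.mem_Icc]
  constructor
  · rintro ⟨hj, hne⟩
    refine ⟨⟨?_, hj⟩, hne⟩
    by_contra hneg
    exact hne (by rw [h0 j (by omega), mul_zero])
  · rintro ⟨⟨_, hj⟩, hne⟩
    exact ⟨hj, hne⟩

set_option maxHeartbeats 1000000 in
theorem qdepth_polynomial (n : ℕ) (hn : 1 ≤ n) (P : Polynomial ℤ)
    (hdeg : P.natDegree = n) (hcoeff : ∀ i, 0 ≤ P.coeff i) (hP0 : 0 < P.eval 0)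
    (h : ℤ → ℤ) (hh : ∀ j : ℤ, h j = if 0 ≤ j then P.eval j else 0)
    (d : ℤ) (hd : IsGreatest (qdepthSet h) d) :
    d ≤ 2 ^ (n + 1) := by
  by_contra hcon
  push_neg at hcon
  have hE2 : (2:ℤ) ≤ 2 ^ n := by
    calc (2:ℤ) = 2 ^ 1 := by ring
    _ ≤ 2 ^ n := pow_le_pow_right₀ (by norm_num) hn
  have hdbig : 2 * 2 ^ n + 1 ≤ d := by
    have : (2:ℤ) ^ (n+1) = 2 * 2 ^ n := by ring
    omega
  have hd5 : (5:ℤ) ≤ d := by omega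
  have hzero : ∀ j : ℤ, j < 0 → h j = 0 := by
    intro j hj; rw [hh]; simp [not_le.mpr hj]
  have hmem := hd.1
  -- values of h
  have h0v : h 0 = P.eval 0 := by rw [hh]; simp
  have h1v : h 1 = P.eval 1 := by rw [hh]; norm_num
  have h2v : h 2 = P.eval 2 := by rw [hh]; norm_num
  -- beta at k = 1
  have hb1 := hmem 1 (by omega)
  have hb2 := hmem 2 (by omega)
  rw [beta_eq_sum h hzero] at hb1 hb2
  have hIcc1 : Finset.Icc (0:ℤ) 1 = {0, 1} := by decide
  have hIcc2 : Finset.Icc (0:ℤ) 2 = {0, 1, 2} := by decide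
  rw [hIcc1] at hb1
  rw [hIcc2] at hb2
  rw [Finset.sum_pair (by norm_num)] at hb1
  rw [show ({0,1,2} : Finset ℤ) = insert 0 {1,2} from rfl,
    Finset.sum_insert (by decide), Finset.sum_pair (by norm_num)] at hb2
  -- simplify toNat's
  have t1 : ((1:ℤ) - 0).toNat = 1 := rfl
  have t2 : ((1:ℤ) - 1).toNat = 0 := rfl
  have t3 : ((2:ℤ) - 0).toNat = 2 := rfl
  have t4 : ((2:ℤ) - 1).toNat = 1 := rfl
  have t5 : ((2:ℤ) - 2).toNat = 0 := rfl
  rw [t1, t2, sub_zero] at hb1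
  rw [t3, t4, t5, sub_zero] at hb2
  -- choose values
  have c1 : ((d.toNat.choose 1 : ℕ) : ℤ) = d := by
    rw [Nat.choose_one_right]; exact Int.toNat_of_nonneg (by omega)
  have c2 : (((d-1).toNat.choose 1 : ℕ) : ℤ) = d - 1 := by
    rw [Nat.choose_one_right]; exact Int.toNat_of_nonneg (by omega)
  set C2 : ℤ := (d.toNat.choose 2 : ℤ) with hC2def
  have c3 : 2 * C2 = d * (d - 1) := by
    have ht : 1 ≤ d.toNat := by omega
    have htd : (d.toNat : ℤ) = d := Int.toNat_of_nonneg (by omega)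
    have hnat : 2 * d.toNat.choose 2 = d.toNat * (d.toNat - 1) := by
      rw [Nat.choose_two_right, Nat.two_mul_div_two_of_even]
      have : d.toNat * (d.toNat - 1) = (d.toNat - 1) * ((d.toNat - 1) + 1) := by
        rw [Nat.sub_add_cancel ht]; ring
      rw [this]; exact Nat.even_mul_succ_self _
    zify [ht] at hnat
    rw [htd] at hnat
    rw [hC2def]
    linarith [hnat]
  simp only [Nat.choose_zero_right, Nat.cast_one, pow_zero, pow_one, c1, c2] at hb1 hb2
  rw [h0v, h1v] at hb1
  rw [h0v, h1v, h2v] at hb2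
  -- now hb1 : 0 ≤ -1 * d * P.eval 0 + 1 * 1 * P.eval 1  (roughly)
  -- polynomial inequality : P.eval 2 ≤ 2^n * P.eval 1 - (2^n - 1) * P.eval 0
  have heval0 : P.eval 0 = P.coeff 0 := (Polynomial.coeff_zero_eq_eval_zero P).symm
  have hpoly : P.eval 2 + (2 ^ n - 1) * P.eval 0 ≤ 2 ^ n * P.eval 1 := by
    have hsum : 2 ^ n * P.eval 1 - P.eval 2
        = ∑ i ∈ Finset.range (n + 1), P.coeff i * (2 ^ n - 2 ^ i) := by
      rw [Polynomial.eval_eq_sum_range (2 : ℤ), Polynomial.eval_eq_sum_range (1 : ℤ), hdeg,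
        Finset.mul_sum, ← Finset.sum_sub_distrib]
      exact Finset.sum_congr rfl fun i _ => by ring
    have h0mem : 0 ∈ Finset.range (n + 1) := by simp
    have hle : P.coeff 0 * (2 ^ n - 2 ^ 0) ≤ ∑ i ∈ Finset.range (n + 1), P.coeff i * (2 ^ n - 2 ^ i) :=
      Finset.single_le_sum (fun i hi => mul_nonneg (hcoeff i)
        (by
          have : (2 : ℤ) ^ i ≤ 2 ^ n :=
            pow_le_pow_right₀ (by norm_num) (by simpa using Nat.lt_succ_iff.mp (Finset.mem_range.mp hi))
          linarith)) h0mem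
    rw [← hsum] at hle
    rw [heval0]
    nlinarith [hle]
  -- final arithmetic contradiction
  norm_num at hb1 hb2
  have hpoly' := hpoly
  set A := P.eval 0 with hA
  set B := P.eval 1 with hB
  set E : ℤ := 2 ^ n with hEdef
  have hA1 : 1 ≤ A := hP0
  have hBdA : d * A ≤ B := by linarith [hb1]
  have hEd : 2 ≤ d - 1 - E := by linarith
  have k1 : (d - 1 - E) * B ≤ (C2 - E + 1) * A := by nlinarith [hb2, hpoly']
  clear hb1 hb2 hpoly hpoly' hmem hd hh hcon
  have k2 : (d - 1 - E) * (d * A) ≤ (d - 1 - E) * B :=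
    mul_le_mul_of_nonneg_left hBdA (by linarith)
  have hc3A : 2 * C2 * A = d * (d - 1) * A := by rw [c3]
  have hcoef : 4 ≤ (d - 1) * (d - 2 * E) := by nlinarith [hE2, hdbig]
  have hfin : ((d - 1) * (d - 2 * E) - 2) * 1 ≤ ((d - 1) * (d - 2 * E) - 2) * A :=
    mul_le_mul_of_nonneg_left hA1 (by linarith)
  linarith [k1, k2, hc3A, hfin, hcoef]
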